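/- Let P be a positive system of roots of L, let h ∈ H satisfy α(h) ≠ 0 for every root α, and let u ∈ N := Σ_{α∈P} L_α be an element with ad u nilpotent. If exp(ad u)(h) lies in H, then u = 0. (Injectivity part of the isomorphism U × 𝔱_gen ≅ 𝔟_gen established, at the level of points, in the paper's proof of the lemma comparing Hamiltonian reduction with restriction over the generic locus: a unipotent element conjugating a generic Cartan element into the Cartan is trivial.) -/

import Mathlib

open LieModule LieAlgebra

/-- The exponential `Σ_{k ≥ 0} (1/k!) • f ^ k` of a nilpotent endomorphism of a
finite-dimensional space.  A nilpotent endomorphism `f` of a space of dimension `d`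
satisfies `f ^ d = 0`, so truncating at `k ≤ d` computes the full (finite) sum. -/
noncomputable def expNilpotent {K L : Type*} [Field K] [AddCommGroup L] [Module K L]
    (f : Module.End K L) : Module.End K L :=
  ∑ k ∈ Finset.range (Module.finrank K L + 1), (k.factorial : K)⁻¹ • f ^ k

/-- **A unipotent element conjugating a generic Cartan element into the Cartan is trivial.**
`K` algebraically closed of characteristic zero, `L` a finite-dimensional Lie algebra over `K`
with nondegenerate Killing form, `H` a Cartan subalgebra.  Let `P` be a positive system of
roots, `h ∈ H` with `α h ≠ 0` for every root `α`, and `u ∈ N := Σ_{α ∈ P} L_α` with `ad u`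
nilpotent.  If `exp (ad u) h ∈ H`, then `u = 0`. -/
theorem exp_ad_generic_mem_cartan_implies_trivial
    {K : Type*} [Field K] [IsAlgClosed K] [CharZero K]
    {L : Type*} [LieRing L] [LieAlgebra K L] [Module.Finite K L]
    [LieAlgebra.IsKilling K L]
    (H : LieSubalgebra K L) [H.IsCartanSubalgebra]
    (P : Set (H → K))
    (hP : ∀ α ∈ P, α ≠ 0 ∧ rootSpace H α ≠ ⊥)
    (hxor : ∀ α : H → K, α ≠ 0 → rootSpace H α ≠ ⊥ → Xor' (α ∈ P) (-α ∈ P))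
    (hadd : ∀ α ∈ P, ∀ β ∈ P, α + β ≠ 0 → rootSpace H (α + β) ≠ ⊥ → α + β ∈ P)
    (hsum : ∀ (m : ℕ) (c : Fin (m + 1) → (H → K)),
      (∀ i, c i ∈ P) → ∑ i, c i ≠ 0)
    (h : H) (hgen : ∀ α : H → K, α ≠ 0 → rootSpace H α ≠ ⊥ → α h ≠ 0)
    (u : L) (hu : u ∈ ⨆ α ∈ P, rootSpace H α)
    (hnil : IsNilpotent (LieAlgebra.ad K L u))
    (hmem : expNilpotent (LieAlgebra.ad K L u) (h : L) ∈ H) :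
    u = 0 := by
  classical
  rcases subsingleton_or_nontrivial L with hL | hL
  · exact Subsingleton.elim u 0
  set f : Module.End K L := LieAlgebra.ad K L u with hf
  set S : Submodule K L :=
    ⨆ α : P, ((rootSpace H (α : H → K) : LieSubmodule K H L) : Submodule K L) with hS
  have huS : u ∈ S := by
    have h1 : ((⨆ α ∈ P, rootSpace H α : LieSubmodule K H L) : Submodule K L)
        = ⨆ α ∈ P, ((rootSpace H α : LieSubmodule K H L) : Submodule K L) := by
      simp_rw [LieSubmodule.iSup_toSubmodule]
    have h2 : (⨆ α ∈ P, ((rootSpace H α : LieSubmodule K H L) : Submodule K L)) = S := by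
      rw [hS, iSup_subtype']
    rw [← LieSubmodule.mem_toSubmodule, h1, h2] at hu
    exact hu
  have hmemS : ∀ α : H → K, α ∈ P → ∀ x : L, x ∈ rootSpace H α → x ∈ S := by
    intro α hα x hx
    exact Submodule.mem_iSup_of_mem (⟨α, hα⟩ : P) hx
  have hsum2 : ∀ α ∈ P, ∀ β ∈ P, α + β ≠ 0 := by
    intro α hα β hβ
    have := hsum 1 ![α, β] (by intro i; fin_cases i <;> simpa)
    simpa [Fin.sum_univ_two] using this
  -- S is closed under brackets
  have hSS : ∀ x ∈ S, ∀ y ∈ S, ⁅x, y⁆ ∈ S := by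
    intro x hx
    refine Submodule.iSup_induction
      (motive := fun x : L => ∀ y ∈ S, ⁅x, y⁆ ∈ S) _ hx (fun α x hxα => ?_) (by simp)
      (fun a b ha hb y hy => ?_)
    · intro y hy
      refine Submodule.iSup_induction
        (motive := fun y : L => ⁅x, y⁆ ∈ S) _ hy (fun β y hyβ => ?_) (by simp)
        (fun a b ha hb => ?_)
      · have hxy : ⁅x, y⁆ ∈ rootSpace H ((α : H → K) + (β : H → K)) :=
          lie_mem_genWeightSpace_of_mem_genWeightSpace hxα hyβ
        by_cases hbot : rootSpace H ((α : H → K) + (β : H → K)) = ⊥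
        · rw [hbot] at hxy
          have hz : ⁅x, y⁆ = (0 : L) := by simpa using hxy
          show ⁅x, y⁆ ∈ S
          rw [hz]; exact Submodule.zero_mem _
        · exact hmemS _ (hadd _ α.2 _ β.2 (hsum2 _ α.2 _ β.2) hbot) _ hxy
      · simpa [lie_add] using Submodule.add_mem _ ha hb
    · simpa [add_lie] using Submodule.add_mem _ (ha y hy) (hb y hy)
  -- bracketing with h stays in S
  have hbrH : ∀ x ∈ S, ⁅x, (h : L)⁆ ∈ S := by
    intro x hx
    refine Submodule.iSup_induction
      (motive := fun x : L => ⁅x, (h : L)⁆ ∈ S) _ hx (fun α x hxα => ?_) (by simp)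
      (fun a b ha hb => ?_)
    · have hmem' : ⁅(h : L), x⁆ ∈ rootSpace H (α : H → K) := by
        have := (rootSpace H (α : H → K)).lie_mem (x := h) hxα
        simpa [LieSubalgebra.coe_bracket_of_module] using this
      have h2 : ⁅x, (h : L)⁆ = -⁅(h : L), x⁆ := by rw [← lie_skew]
      show ⁅x, (h : L)⁆ ∈ S
      rw [h2]
      exact Submodule.neg_mem _ (hmemS _ α.2 _ hmem')
    · simpa [add_lie] using Submodule.add_mem _ ha hb
  have hfS : ∀ x ∈ S, f x ∈ S := by
    intro x hx
    simpa [hf, LieAlgebra.ad_apply] using hSS u huS x hx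
  have hpow : ∀ k : ℕ, (f ^ (k + 1)) (h : L) ∈ S := by
    intro k
    induction k with
    | zero =>
      simpa [hf, LieAlgebra.ad_apply] using hbrH u huS
    | succ k ih =>
      have : (f ^ (k + 1 + 1)) (h : L) = f ((f ^ (k + 1)) (h : L)) := by
        rw [pow_succ']; rfl
      rw [this]
      exact hfS _ ih
  -- the eigenspace machinery
  set f₀ : Module.End K L := toEnd K H L h with hf₀
  set E : K → Submodule K L := fun μ => f₀.maxGenEigenspace μ with hE
  have hind : iSupIndep E := by
    have := Module.End.independent_genEigenspace f₀ ⊤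
    simpa only [hE, Module.End.maxGenEigenspace, Module.End.genEigenspace_top] using this
  have hdisj : Disjoint (E 0) (⨆ μ ∈ {μ : K | μ ≠ 0}, E μ) :=
    hind.disjoint_biSup (by simp)
  have hroot : ∀ α : H → K, ∀ x : L, x ∈ rootSpace H α → x ∈ E (α h) := by
    intro α x hx
    have := genWeightSpace_le_genWeightSpaceOf L h α hx
    rw [mem_genWeightSpaceOf] at this
    rw [hE, Module.End.mem_maxGenEigenspace]
    exact this
  have hSle : S ≤ ⨆ μ ∈ {μ : K | μ ≠ 0}, E μ := by
    rw [hS]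
    refine iSup_le fun α => ?_
    intro x hx
    have hαh : (α : H → K) h ≠ 0 := hgen _ (hP _ α.2).1 (hP _ α.2).2
    exact Submodule.mem_iSup_of_mem ((α : H → K) h)
      (Submodule.mem_iSup_of_mem hαh (hroot _ _ hx))
  have hHE : ∀ x : L, x ∈ H → x ∈ E 0 := by
    intro x hx
    have hx' : x ∈ rootSpace H (0 : H → K) := by
      rw [rootSpace_zero_eq]
      exact hx
    simpa using hroot (0 : H → K) x hx'
  -- decompose the exponential
  set d := Module.finrank K L with hd
  set n : L := ∑ j ∈ Finset.range d, (((j + 1).factorial : K))⁻¹ • (f ^ (j + 1)) (h : L)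
    with hn
  have hexp : expNilpotent f (h : L) = n + (h : L) := by
    rw [expNilpotent]
    rw [LinearMap.coe_sum, Finset.sum_apply]
    rw [Finset.sum_range_succ']
    simp [hn, hd]
  have hnS : n ∈ S := by
    rw [hn]
    exact Submodule.sum_mem _ fun j _ => Submodule.smul_mem _ _ (hpow j)
  have hnH : n ∈ H := by
    have h1 : expNilpotent f (h : L) ∈ H := hmem
    rw [hexp] at h1
    simpa using H.sub_mem h1 h.2
  have hn0 : n = 0 :=
    Submodule.disjoint_def.mp hdisj n (hHE n hnH) (hSle hnS)
  -- deduce ⁅u, h⁆ = 0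
  have hdpos : 0 < d := hd ▸ Module.finrank_pos
  obtain ⟨e, hde⟩ : ∃ e, d = e + 1 := ⟨d - 1, by omega⟩
  set v : L := f (h : L) with hv
  set q : Module.End K L := ∑ j ∈ Finset.range e, (((j + 2).factorial : K))⁻¹ • f ^ j with hq
  set m : Module.End K L := ∑ j ∈ Finset.range e, (((j + 2).factorial : K))⁻¹ • f ^ (j + 1)
    with hm
  have hmfq : m = f * q := by
    rw [hm, hq, Finset.mul_sum]
    refine Finset.sum_congr rfl fun j _ => ?_
    rw [mul_smul_comm, ← pow_succ']
  have hcomm : Commute f q := by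
    rw [hq]
    refine Commute.sum_right _ _ _ fun j _ => ?_
    exact ((Commute.refl f).pow_right j).smul_right _
  have hmnil : IsNilpotent m := by
    obtain ⟨N, hN⟩ := hnil
    refine ⟨N, ?_⟩
    rw [hmfq, hcomm.mul_pow, hN, zero_mul]
  have hgv : v + m v = 0 := by
    have h1 : (0 : L) = ∑ j ∈ Finset.range d, (((j + 1).factorial : K))⁻¹ • (f ^ j) v := by
      rw [← hn0, hn]
      refine Finset.sum_congr rfl fun j _ => ?_
      rw [hv, pow_succ]; rfl
    rw [hde, Finset.sum_range_succ'] at h1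
    have h2 : ∑ j ∈ Finset.range e, (((j + 1 + 1).factorial : K))⁻¹ • (f ^ (j + 1)) v
        = m v := by
      rw [hm, LinearMap.coe_sum, Finset.sum_apply]
      simp
    rw [h2] at h1
    have h3 : (((0 + 1).factorial : K))⁻¹ • (f ^ 0) v = v := by norm_num
    rw [h3, add_comm] at h1
    exact h1.symm
  have hv0 : v = 0 := by
    have hUnit : IsUnit (m + 1) := hmnil.isUnit_add_one
    have hz : (m + 1) v = 0 := by
      rw [LinearMap.add_apply, Module.End.one_apply, add_comm]
      exact hgv
    obtain ⟨w, hw⟩ := hUnit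
    have h4 : ((w⁻¹ : (Module.End K L)ˣ) : Module.End K L) ((m + 1) v) = v := by
      rw [← Module.End.mul_apply, ← hw, Units.inv_mul, Module.End.one_apply]
    rw [hz, map_zero] at h4
    exact h4.symm
  -- finish: ad h kills u, but ad h is "invertible" on S
  have hfu : f₀ u = 0 := by
    have h1 : ⁅u, (h : L)⁆ = 0 := by
      simpa [hv, hf, LieAlgebra.ad_apply] using hv0
    have h2 : f₀ u = ⁅(h : L), u⁆ := by
      rw [hf₀]
      simp [LieModule.toEnd_apply_apply, LieSubalgebra.coe_bracket_of_module]
    rw [h2, ← lie_skew, h1, neg_zero]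
  have huE : u ∈ E 0 := by
    rw [hE, Module.End.mem_maxGenEigenspace]
    exact ⟨1, by simpa using hfu⟩
  exact Submodule.disjoint_def.mp hdisj u huE (hSle huS)
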